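/- Every finite multiset of nonzero complex numbers can be written uniquely (up to reordering) as a disjoint union of q-segments such that every pair of these segments is in general position. -/

import Mathlib

open scoped BigOperators
open Classical in
/-- The `q`-segment of origin `a` and length `k`: `{a, aq², …, aq^{2k-2}}`. -/
noncomputable def qSegment (q a : ℂ) (k : ℕ) : Finset ℂ :=
  (Finset.range k).image (fun j => a * q ^ (2 * j))

/-- A finite set is a `q`-segment if it is `Σ(k,a)` for some `a ≠ 0` and `k ≥ 1`. -/
def IsQSegment (q : ℂ) (s : Finset ℂ) : Prop :=
  ∃ (a : ℂ) (k : ℕ), a ≠ 0 ∧ 1 ≤ k ∧ s = qSegment q a k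

open Classical in
/-- Two `q`-segments are in special position if neither contains the other and their
union is again a `q`-segment; general position is the negation of special position. -/
def InGeneralPosition (q : ℂ) (s t : Finset ℂ) : Prop :=
  ¬ (¬ s ⊆ t ∧ ¬ t ⊆ s ∧ IsQSegment q (s ∪ t))

namespace QSegAux

variable {q : ℂ}

/-- `g q x n = x * q^(2n)` for `n : ℤ`. -/
noncomputable def g (q x : ℂ) (n : ℤ) : ℂ := x * q ^ (2 * n)

lemma zpow_ne_one (hq : q ≠ 0) (hq' : ∀ n : ℕ, 0 < n → q ^ n ≠ 1)
    {z : ℤ} (hz : z ≠ 0) : q ^ z ≠ 1 := by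
  rcases lt_trichotomy z 0 with h | h | h
  · intro hone
    have h2 : q ^ (-z) = 1 := by
      rw [zpow_neg, hone, inv_one]
    have hn : 0 < (-z).toNat := by omega
    have := hq' (-z).toNat hn
    rw [← zpow_natCast q (-z).toNat] at this
    rw [Int.toNat_of_nonneg (by omega)] at this
    exact this h2
  · omega
  · intro hone
    have hn : 0 < z.toNat := by omega
    have := hq' z.toNat hn
    rw [← zpow_natCast q z.toNat] at this
    rw [Int.toNat_of_nonneg (by omega)] at this
    exact this hone

lemma g_inj (hq : q ≠ 0) (hq' : ∀ n : ℕ, 0 < n → q ^ n ≠ 1) {x : ℂ} (hx : x ≠ 0)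
    {a b : ℤ} (h : g q x a = g q x b) : a = b := by
  by_contra hne
  have h1 : q ^ (2*a) = q ^ (2*b) := by
    have := mul_left_cancel₀ hx h
    exact this
  have h2 : q ^ (2*a - 2*b) = 1 := by
    rw [zpow_sub₀ hq, h1, div_self (zpow_ne_zero _ hq)]
  exact zpow_ne_one hq hq' (by omega) h2

lemma g_ne_zero (hq : q ≠ 0) {x : ℂ} (hx : x ≠ 0) (n : ℤ) : g q x n ≠ 0 :=
  mul_ne_zero hx (zpow_ne_zero _ hq)

lemma g_g (hq : q ≠ 0) (x : ℂ) (n t : ℤ) : g q (g q x n) t = g q x (n + t) := by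
  unfold g
  rw [mul_assoc, ← zpow_add₀ hq]
  ring_nf

lemma g_zero (x : ℂ) : g q x 0 = x := by simp [g]

/-- Class segment: image of `Icc i j` under `g q x`. -/
noncomputable def CS (q x : ℂ) (i j : ℤ) : Finset ℂ :=
  (Finset.Icc i j).image (g q x)

lemma mem_CS {x y : ℂ} {i j : ℤ} :
    y ∈ CS q x i j ↔ ∃ n, i ≤ n ∧ n ≤ j ∧ y = g q x n := by
  simp only [CS, Finset.mem_image, Finset.mem_Icc]
  constructor
  · rintro ⟨n, ⟨h1, h2⟩, h3⟩; exact ⟨n, h1, h2, h3.symm⟩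
  · rintro ⟨n, h1, h2, h3⟩; exact ⟨n, ⟨h1, h2⟩, h3.symm⟩

lemma g_mem_CS (hq : q ≠ 0) (hq' : ∀ n : ℕ, 0 < n → q ^ n ≠ 1) {x : ℂ} (hx : x ≠ 0)
    {i j n : ℤ} : g q x n ∈ CS q x i j ↔ (i ≤ n ∧ n ≤ j) := by
  rw [mem_CS]
  constructor
  · rintro ⟨t, h1, h2, h3⟩
    have := g_inj hq hq' hx h3
    omega
  · rintro ⟨h1, h2⟩; exact ⟨n, h1, h2, rfl⟩

lemma CS_shift (hq : q ≠ 0) (x : ℂ) (n i j : ℤ) :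
    CS q (g q x n) i j = CS q x (n + i) (n + j) := by
  apply Finset.ext
  intro y
  simp only [mem_CS]
  constructor
  · rintro ⟨t, h1, h2, h3⟩
    exact ⟨n + t, by omega, by omega, by rw [h3, g_g hq]⟩
  · rintro ⟨t, h1, h2, h3⟩
    exact ⟨t - n, by omega, by omega, by rw [h3, g_g hq]; ring_nf⟩

lemma qSegment_eq_CS (hq : q ≠ 0) (a : ℂ) (k : ℕ) :
    qSegment q a k = CS q a 0 ((k : ℤ) - 1) := by
  apply Finset.ext
  intro y
  simp only [qSegment, Finset.mem_image, Finset.mem_range, mem_CS]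
  constructor
  · rintro ⟨jn, hjn, hy⟩
    refine ⟨jn, by omega, by omega, ?_⟩
    rw [← hy]
    unfold g
    norm_cast
  · rintro ⟨n, h1, h2, h3⟩
    refine ⟨n.toNat, by omega, ?_⟩
    have hcast : ((2 * n.toNat : ℕ) : ℤ) = 2 * n := by omega
    rw [h3]
    unfold g
    rw [← zpow_natCast q (2 * n.toNat), hcast]

lemma CS_isQSegment (hq : q ≠ 0) {x : ℂ} (hx : x ≠ 0) {i j : ℤ} (hij : i ≤ j) :
    IsQSegment q (CS q x i j) := by
  refine ⟨g q x i, (j - i + 1).toNat, g_ne_zero hq hx i, by omega, ?_⟩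
  rw [qSegment_eq_CS hq, CS_shift hq]
  congr 1 <;> omega

lemma isQSegment_rebase (hq : q ≠ 0) {s : Finset ℂ} (hs : IsQSegment q s)
    {y : ℂ} (hy : y ∈ s) : ∃ i j : ℤ, i ≤ 0 ∧ 0 ≤ j ∧ s = CS q y i j := by
  obtain ⟨a, k, ha, hk, rfl⟩ := hs
  rw [qSegment_eq_CS hq] at hy ⊢
  rw [mem_CS] at hy
  obtain ⟨t, h1, h2, rfl⟩ := hy
  refine ⟨-t, (k : ℤ) - 1 - t, by omega, by omega, ?_⟩
  rw [CS_shift hq]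
  congr 1 <;> omega

lemma isQSegment_nonempty (hs : IsQSegment q s) : s.Nonempty := by
  obtain ⟨a, k, ha, hk, rfl⟩ := hs
  refine ⟨a * q ^ (2 * 0), ?_⟩
  simp only [qSegment, Finset.mem_image]
  exact ⟨0, Finset.mem_range.2 (by omega), rfl⟩

lemma inGeneralPosition_symm {s t : Finset ℂ} (h : InGeneralPosition q s t) :
    InGeneralPosition q t s := by
  unfold InGeneralPosition at *
  rw [Finset.union_comm]
  tauto





lemma mem_of_mem_of_mem_msum {α : Type*} {T : Multiset (Finset α)} {s : Finset α}
    (hs : s ∈ T) : s.val ≤ (T.map Finset.val).sum := by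
  classical
  rw [← Multiset.cons_erase hs, Multiset.map_cons, Multiset.sum_cons]
  exact le_add_right (le_refl _)

lemma exists_mem_of_mem_msum {α : Type*} {T : Multiset (Finset α)} {y : α}
    (hy : y ∈ (T.map Finset.val).sum) : ∃ s ∈ T, y ∈ s := by
  induction T using Multiset.induction with
  | empty => simp at hy
  | cons a t ih =>
    rw [Multiset.map_cons, Multiset.sum_cons, Multiset.mem_add] at hy
    rcases hy with h | h
    · exact ⟨a, Multiset.mem_cons_self a t, h⟩
    · obtain ⟨s, hs, hys⟩ := ih h
      exact ⟨s, Multiset.mem_cons_of_mem hs, hys⟩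

/-- Key step A: a segment of `T` meeting the component `[i,j]` lies inside it. -/
lemma seg_inside (hq : q ≠ 0) (hq' : ∀ n : ℕ, 0 < n → q ^ n ≠ 1) {x : ℂ} (hx : x ≠ 0)
    {i j : ℤ} {m : Multiset ℂ}
    (hin : ∀ n, i ≤ n → n ≤ j → g q x n ∈ m)
    (hlo : g q x (i-1) ∉ m) (hhi : g q x (j+1) ∉ m)
    {s : Finset ℂ} (hseg : IsQSegment q s) (hsm : ∀ y ∈ s, y ∈ m)
    {n : ℤ} (hni : i ≤ n) (hnj : n ≤ j) (hns : g q x n ∈ s) :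
    ∃ i₂ j₂ : ℤ, i ≤ i₂ ∧ i₂ ≤ n ∧ n ≤ j₂ ∧ j₂ ≤ j ∧ s = CS q x i₂ j₂ := by
  obtain ⟨a, b, ha, hb, hs⟩ := isQSegment_rebase hq hseg hns
  rw [CS_shift hq] at hs
  have hmem : ∀ t, n + a ≤ t → t ≤ n + b → g q x t ∈ m := by
    intro t h1 h2
    apply hsm
    rw [hs, g_mem_CS hq hq' hx]
    omega
  have h1 : i ≤ n + a := by
    by_contra hcon
    exact hlo (hmem (i-1) (by omega) (by omega))
  have h2 : n + b ≤ j := by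
    by_contra hcon
    exact hhi (hmem (j+1) (by omega) (by omega))
  exact ⟨n + a, n + b, h1, by omega, by omega, h2, hs⟩

/-- Key lemma: the maximal component `CS q x i j` of the support belongs to any
valid decomposition `T`. -/
lemma component_mem (hq : q ≠ 0) (hq' : ∀ n : ℕ, 0 < n → q ^ n ≠ 1) {x : ℂ} (hx : x ≠ 0)
    {i j : ℤ} (hij : i ≤ j) {m : Multiset ℂ} {T : Multiset (Finset ℂ)}
    (hTseg : ∀ s ∈ T, IsQSegment q s) (hTsum : (T.map Finset.val).sum = m)
    (hTpair : T.Pairwise (InGeneralPosition q))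
    (hin : ∀ n, i ≤ n → n ≤ j → g q x n ∈ m)
    (hlo : g q x (i-1) ∉ m) (hhi : g q x (j+1) ∉ m) :
    CS q x i j ∈ T := by
  have hsm : ∀ s ∈ T, ∀ y ∈ s, y ∈ m := by
    intro s hs y hy
    rw [← hTsum]
    exact Multiset.mem_of_le (mem_of_mem_of_mem_msum hs) hy
  have hpair : ∀ s ∈ T, ∀ t ∈ T, s ≠ t → InGeneralPosition q s t :=
    by haveI : Std.Symm (InGeneralPosition q) := ⟨fun _ _ => inGeneralPosition_symm⟩; exact Multiset.Pairwise.forall hTpair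
  -- find some segment containing g x n for n in [i,j]
  have hfind : ∀ n, i ≤ n → n ≤ j → ∃ i₂ j₂ : ℤ, i ≤ i₂ ∧ i₂ ≤ n ∧ n ≤ j₂ ∧ j₂ ≤ j ∧
      CS q x i₂ j₂ ∈ T := by
    intro n h1 h2
    have : g q x n ∈ m := hin n h1 h2
    rw [← hTsum] at this
    obtain ⟨s, hsT, hns⟩ := exists_mem_of_mem_msum this
    obtain ⟨i₂, j₂, ha, hb, hc, hd, he⟩ :=
      seg_inside hq hq' hx hin hlo hhi (hTseg s hsT) (hsm s hsT) h1 h2 hns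
    exact ⟨i₂, j₂, ha, hb, hc, hd, he ▸ hsT⟩
  -- inner induction: grow a segment starting at i up to j
  have grow : ∀ d : ℕ, ∀ j₀ : ℤ, j - j₀ ≤ (d : ℤ) → i ≤ j₀ → j₀ ≤ j →
      CS q x i j₀ ∈ T → CS q x i j ∈ T := by
    intro d
    induction d using Nat.strong_induction_on with
    | _ d ih =>
      intro j₀ hd h1 h2 hmem
      by_cases hj : j₀ = j
      · rwa [hj] at hmem
      · have hj' : j₀ < j := lt_of_le_of_ne h2 hj
        obtain ⟨i₁, j₁, ha, hb, hc, hd', hmem₁⟩ := hfind (j₀ + 1) (by omega) (by omega)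
        set s₀ := CS q x i j₀ with hs₀
        set s₁ := CS q x i₁ j₁ with hs₁
        have hnotmem : g q x (j₀+1) ∉ s₀ := by
          rw [hs₀, g_mem_CS hq hq' hx]; omega
        have hmem01 : g q x (j₀+1) ∈ s₁ := by
          rw [hs₁, g_mem_CS hq hq' hx]; omega
        have hne : s₀ ≠ s₁ := by
          intro h; rw [h] at hnotmem; exact hnotmem hmem01
        have hgp := hpair s₀ hmem s₁ hmem₁ hne
        by_cases hsub : s₀ ⊆ s₁
        · -- s₁ = CS x i j₁ with j₁ > j₀
          have hii : g q x i ∈ s₁ := hsub (by rw [hs₀, g_mem_CS hq hq' hx]; omega)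
          rw [hs₁, g_mem_CS hq hq' hx] at hii
          have hi₁ : i₁ = i := by omega
          have : CS q x i j₁ ∈ T := by rw [← hi₁]; exact hmem₁
          exact ih (j - j₁).toNat (by omega) j₁ (by omega) (by omega) (by omega) this
        · exfalso
          apply hgp
          refine ⟨hsub, fun h => hnotmem (h hmem01), ?_⟩
          have hunion : s₀ ∪ s₁ = CS q x (min i i₁) (max j₀ j₁) := by
            apply Finset.ext
            intro y
            simp only [Finset.mem_union, hs₀, hs₁, mem_CS]
            constructor
            · rintro (⟨t, h1', h2', h3'⟩ | ⟨t, h1', h2', h3'⟩) <;>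
                exact ⟨t, by omega, by omega, h3'⟩
            · rintro ⟨t, h1', h2', h3'⟩
              by_cases ht : t ≤ j₀
              · exact Or.inl ⟨t, by omega, by omega, h3'⟩
              · exact Or.inr ⟨t, by omega, by omega, h3'⟩
          rw [hunion]
          exact CS_isQSegment hq hx (by omega)
  obtain ⟨i₂, j₂, ha, hb, hc, hd, hmem⟩ := hfind i (le_refl i) hij
  have hi₂ : i₂ = i := by omega
  rw [hi₂] at hmem
  exact grow (j - j₂).toNat j₂ (by omega) (by omega) hd hmem





lemma exists_not_mem {f : ℕ → ℂ} (hf : Function.Injective f) (m : Multiset ℂ) :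
    ∃ n : ℕ, f n ∉ m := by
  by_contra h
  push_neg at h
  have hsub : (Finset.range (m.toFinset.card + 1)).image f ⊆ m.toFinset := by
    intro y hy
    rw [Finset.mem_image] at hy
    obtain ⟨n, _, rfl⟩ := hy
    exact Multiset.mem_toFinset.2 (h n)
  have hcard := Finset.card_le_card hsub
  rw [Finset.card_image_of_injective _ hf, Finset.card_range] at hcard
  omega

lemma exists_component (hq : q ≠ 0) (hq' : ∀ n : ℕ, 0 < n → q ^ n ≠ 1)
    {x : ℂ} (hx : x ≠ 0) {m : Multiset ℂ} (hxm : x ∈ m) :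
    ∃ i j : ℤ, i ≤ 0 ∧ 0 ≤ j ∧ (∀ n, i ≤ n → n ≤ j → g q x n ∈ m) ∧
      g q x (i-1) ∉ m ∧ g q x (j+1) ∉ m := by
  have hinjp : Function.Injective (fun n : ℕ => g q x (n : ℤ)) := by
    intro a b h
    exact_mod_cast g_inj hq hq' hx h
  have hinjn : Function.Injective (fun n : ℕ => g q x (-(n : ℤ))) := by
    intro a b h
    have := g_inj hq hq' hx h
    omega
  obtain hpos := exists_not_mem hinjp m
  obtain hneg := exists_not_mem hinjn m
  set u := Nat.find hpos with hu
  set d := Nat.find hneg with hd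
  have hu0 : 0 < u := by
    rcases Nat.eq_zero_or_pos u with h | h
    · exfalso
      have := Nat.find_spec hpos
      rw [← hu, h] at this
      simp only [Int.natCast_zero] at this
      rw [g_zero] at this
      exact this hxm
    · exact h
  have hd0 : 0 < d := by
    rcases Nat.eq_zero_or_pos d with h | h
    · exfalso
      have := Nat.find_spec hneg
      rw [← hd, h] at this
      simp only [Int.natCast_zero, neg_zero] at this
      rw [g_zero] at this
      exact this hxm
    · exact h
  refine ⟨-(d : ℤ) + 1, (u : ℤ) - 1, by omega, by omega, ?_, ?_, ?_⟩
  · intro n h1 h2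
    rcases le_or_gt 0 n with h | h
    · have hn : n.toNat < u := by omega
      have := Nat.find_min hpos hn
      simp only [not_not] at this
      have hcast : ((n.toNat : ℕ) : ℤ) = n := by omega
      rwa [hcast] at this
    · have hn : (-n).toNat < d := by omega
      have := Nat.find_min hneg hn
      simp only [not_not] at this
      have hcast : -(((-n).toNat : ℕ) : ℤ) = n := by omega
      rwa [hcast] at this
  · have := Nat.find_spec hneg
    rw [← hd] at this
    have hcast : -((d : ℕ) : ℤ) = -(d : ℤ) + 1 - 1 := by omega
    rwa [hcast] at this
  · have := Nat.find_spec hpos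
    rw [← hu] at this
    have hcast : ((u : ℕ) : ℤ) = (u : ℤ) - 1 + 1 := by omega
    rwa [hcast] at this

end QSegAux

open QSegAux

/-- Every finite multiset of nonzero complex numbers can be written uniquely,
up to reordering (i.e. as a multiset of segments), as a disjoint union of
`q`-segments which are pairwise in general position. -/
theorem multiset_unique_qsegment_decomposition
    (q : ℂ) (hq : q ≠ 0) (hq' : ∀ n : ℕ, 0 < n → q ^ n ≠ 1)
    (m : Multiset ℂ) (hm : ∀ x ∈ m, x ≠ (0 : ℂ)) :
    ∃! S : Multiset (Finset ℂ),
      (∀ s ∈ S, IsQSegment q s) ∧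
      (S.map Finset.val).sum = m ∧
      S.Pairwise (InGeneralPosition q) := by
  classical
  induction m using Multiset.strongInductionOn with
  | ih m ih => ?_
  by_cases h0 : m = 0
  · subst h0
    refine ⟨0, ⟨by simp, by simp, ⟨[], by simp, List.Pairwise.nil⟩⟩, ?_⟩
    rintro T ⟨hTseg, hTsum, -⟩
    by_contra hT
    obtain ⟨s, hsT⟩ := Multiset.exists_mem_of_ne_zero hT
    have h1 : s.val ≤ 0 := hTsum ▸ mem_of_mem_of_mem_msum hsT
    obtain ⟨y, hy⟩ := isQSegment_nonempty (hTseg s hsT)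
    have := Multiset.mem_of_le h1 hy
    simp at this
  · obtain ⟨x, hxm⟩ := Multiset.exists_mem_of_ne_zero h0
    have hx := hm x hxm
    obtain ⟨i, j, hi0, hj0, hin, hlo, hhi⟩ := exists_component hq hq' hx hxm
    set I := CS q x i j with hI
    have hxI : x ∈ I := by
      have : g q x 0 ∈ CS q x i j := (g_mem_CS hq hq' hx).2 ⟨hi0, hj0⟩
      rwa [g_zero] at this
    have hIval : I.val ≤ m := by
      rw [Multiset.le_iff_count]
      intro y
      by_cases hy : y ∈ I
      · have h1 : I.val.count y = 1 := Multiset.count_eq_one_of_mem I.nodup hy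
        rw [h1]
        have hym : y ∈ m := by
          rw [hI, mem_CS] at hy
          obtain ⟨n, h1', h2', rfl⟩ := hy
          exact hin n h1' h2'
        exact Multiset.one_le_count_iff_mem.2 hym
      · have : I.val.count y = 0 := Multiset.count_eq_zero.2 (by simpa using hy)
        rw [this]
        exact Nat.zero_le _
    set m' := m - I.val with hm'def
    have hmI : m' + I.val = m := tsub_add_cancel_of_le hIval
    have hm'lt : m' < m := by
      refine lt_of_le_of_ne tsub_le_self ?_
      intro h
      have hcI : I.val.count x = 1 := Multiset.count_eq_one_of_mem I.nodup hxI
      have hc := congrArg (Multiset.count x) hmI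
      rw [h, Multiset.count_add, hcI] at hc
      omega
    have hm'ne : ∀ y ∈ m', y ≠ 0 := fun y hy => hm y (Multiset.mem_of_le tsub_le_self hy)
    obtain ⟨S', ⟨hS'seg, hS'sum, hS'pair⟩, hS'uniq⟩ := ih m' hm'lt hm'ne
    have hIseg : IsQSegment q I := CS_isQSegment hq hx (by omega)
    have hgen : ∀ s' ∈ S', InGeneralPosition q I s' := by
      intro s' hs'
      rintro ⟨hnIs, hnsI, hu⟩
      have hs'm : ∀ y ∈ s', y ∈ m := by
        intro y hy
        have h1 : s'.val ≤ m' := hS'sum ▸ mem_of_mem_of_mem_msum hs'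
        exact Multiset.mem_of_le (h1.trans tsub_le_self) hy
      have hxu : x ∈ I ∪ s' := Finset.mem_union_left _ hxI
      obtain ⟨a, b, ha, hb, huCS⟩ := isQSegment_rebase hq hu hxu
      obtain ⟨y, hys, hyI⟩ := Finset.not_subset.1 hnsI
      have hyu : y ∈ CS q x a b := huCS ▸ Finset.mem_union_right _ hys
      rw [mem_CS] at hyu
      obtain ⟨t, hta, htb, rfl⟩ := hyu
      have htn : ¬ (i ≤ t ∧ t ≤ j) := fun hc => hyI ((g_mem_CS hq hq' hx).2 hc)
      have hIsub : ∀ n, i ≤ n → n ≤ j → a ≤ n ∧ n ≤ b := by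
        intro n h1 h2
        have : g q x n ∈ CS q x a b :=
          huCS ▸ Finset.mem_union_left _ ((g_mem_CS hq hq' hx).2 ⟨h1, h2⟩)
        exact (g_mem_CS hq hq' hx).1 this
      have hij1 := hIsub i le_rfl (by omega)
      have hij2 := hIsub j (by omega) le_rfl
      have hbad : ∃ bad : ℤ, a ≤ bad ∧ bad ≤ b ∧ ¬ (i ≤ bad ∧ bad ≤ j) ∧
          g q x bad ∉ m := by
        rcases lt_or_ge t i with h | h
        · exact ⟨i - 1, by omega, by omega, by omega, hlo⟩
        · exact ⟨j + 1, by omega, by omega, by omega, hhi⟩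
      obtain ⟨bad, hba, hbb, hbij, hbm⟩ := hbad
      have : g q x bad ∈ I ∪ s' := by
        rw [huCS]
        exact (g_mem_CS hq hq' hx).2 ⟨hba, hbb⟩
      rcases Finset.mem_union.1 this with h | h
      · exact hbij ((g_mem_CS hq hq' hx).1 h)
      · exact hbm (hs'm _ h)
    refine ⟨I ::ₘ S', ⟨?_, ?_, ?_⟩, ?_⟩
    · intro s hs
      rcases Multiset.mem_cons.1 hs with rfl | hs
      · exact hIseg
      · exact hS'seg s hs
    · rw [Multiset.map_cons, Multiset.sum_cons, hS'sum, add_comm]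
      exact hmI
    · obtain ⟨l, hl, hp⟩ := hS'pair
      refine ⟨I :: l, by rw [hl, ← Multiset.cons_coe], ?_⟩
      exact List.Pairwise.cons
        (fun s' hs' => hgen s' (by rw [hl]; exact Multiset.mem_coe.2 hs')) hp
    · rintro T ⟨hTseg, hTsum, hTpair⟩
      have hIT : I ∈ T := component_mem hq hq' hx (by omega) hTseg hTsum hTpair hin hlo hhi
      have hTdecomp : T = I ::ₘ T.erase I := (Multiset.cons_erase hIT).symm
      have hT'sum : ((T.erase I).map Finset.val).sum = m' := by
        have h2 : I.val + ((T.erase I).map Finset.val).sum = m := by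
          rw [← hTsum]
          conv_rhs => rw [hTdecomp]
          rw [Multiset.map_cons, Multiset.sum_cons]
        have h3 : I.val + m' = m := by rw [add_comm]; exact hmI
        exact add_left_cancel (h2.trans h3.symm)
      have hT'pair : (T.erase I).Pairwise (InGeneralPosition q) := by
        obtain ⟨l, hlT, hpT⟩ := hTpair
        refine ⟨l.erase I, ?_, hpT.sublist (l.erase_sublist (a := I))⟩
        rw [hlT, ← Multiset.coe_erase]
      have hT' : T.erase I = S' :=
        hS'uniq (T.erase I) ⟨fun s hs => hTseg s (Multiset.mem_of_mem_erase hs),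
          hT'sum, hT'pair⟩
      rw [hTdecomp, hT']
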